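/- For every n ≥ 3 there exist two vertices x, y of Q_n of opposite parities and a set P of 2n − 3 edges of Q_n whose induced subgraph is a linear forest, with no path of P joining x and y and neither x nor y incident with more than one edge of P, such that no Hamiltonian path of Q_n from x to y contains all edges of P. -/

import Mathlib

open SimpleGraph Finset

/-- The n-dimensional hypercube: vertices are 0/1 vectors, adjacent iff
Hamming distance is 1. -/
def cube (n : ℕ) : SimpleGraph (Fin n → ZMod 2) where
  Adj x y := hammingDist x y = 1
  symm := by constructor; intro x y h; show hammingDist y x = 1; rw [hammingDist_comm]; exact h
  loopless := by constructor; intro x h; simp [hammingDist_self] at h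

/-- Parity of a vertex: sum of coordinates mod 2. -/
def parity {n : ℕ} (u : Fin n → ZMod 2) : ZMod 2 := ∑ i, u i



variable {V : Type*} {G : SimpleGraph V}

namespace SimpleGraph.Walk

/-- In a path, any edge incident to the start vertex goes to the second vertex. -/
lemma CK_start_edge {x y c : V} {w : G.Walk x y} (hw : w.IsPath) (he : s(x, c) ∈ w.edges) :
    c = w.getVert 1 := by
  cases w with
  | nil => simp at he
  | @cons _ z _ h p =>
    rw [Walk.cons_isPath_iff] at hw
    rw [Walk.edges_cons] at he
    rcases List.mem_cons.mp he with h1 | h2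
    · rcases Sym2.eq_iff.mp h1 with ⟨-, rfl⟩ | ⟨rfl, rfl⟩
      · simp [Walk.getVert_cons_succ]
      · exact absurd p.start_mem_support hw.2
    · exact absurd (p.fst_mem_support_of_mem_edges h2) hw.2

/-- A vertex of a path has at most two incident edges. -/
lemma CK_no_three_edges {x y v a b c : V} {w : G.Walk x y} (hw : w.IsPath)
    (hab : a ≠ b) (hac : a ≠ c) (hbc : b ≠ c)
    (ha : s(v, a) ∈ w.edges) (hb : s(v, b) ∈ w.edges) (hc : s(v, c) ∈ w.edges) : False := by
  induction w with
  | nil => simp at ha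
  | @cons x z _ h p ih =>
    have hw' := (Walk.cons_isPath_iff _ _).mp hw
    by_cases hvx : v = x
    · subst hvx
      exact hab ((CK_start_edge hw ha).trans (CK_start_edge hw hb).symm)
    have conv : ∀ d, s(v, d) ∈ (Walk.cons h p).edges →
        (v = z ∧ d = x) ∨ s(v, d) ∈ p.edges := by
      intro d hd
      rw [Walk.edges_cons] at hd
      rcases List.mem_cons.mp hd with h1 | h2
      · rcases Sym2.eq_iff.mp h1 with ⟨rfl, rfl⟩ | ⟨rfl, rfl⟩
        · exact absurd rfl hvx
        · exact Or.inl ⟨rfl, rfl⟩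
      · exact Or.inr h2
    rcases conv a ha with ⟨rfl, rfl⟩ | ha'
    · rcases conv b hb with ⟨-, rfl⟩ | hb'
      · exact hab rfl
      rcases conv c hc with ⟨-, rfl⟩ | hc'
      · exact hac rfl
      exact hbc ((CK_start_edge hw'.1 hb').trans (CK_start_edge hw'.1 hc').symm)
    · rcases conv b hb with ⟨rfl, rfl⟩ | hb'
      · rcases conv c hc with ⟨-, rfl⟩ | hc'
        · exact hbc rfl
        exact hac ((CK_start_edge hw'.1 ha').trans (CK_start_edge hw'.1 hc').symm)
      rcases conv c hc with ⟨rfl, rfl⟩ | hc'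
      · exact hab ((CK_start_edge hw'.1 ha').trans (CK_start_edge hw'.1 hb').symm)
      · exact ih hw'.1 ha' hb' hc'

/-- An interior vertex of a path has two distinct incident edges. -/
lemma CK_two_edges {x y v : V} {w : G.Walk x y} (hw : w.IsPath) (hv : v ∈ w.support)
    (hvx : v ≠ x) (hvy : v ≠ y) :
    ∃ a b, a ≠ b ∧ s(v, a) ∈ w.edges ∧ s(v, b) ∈ w.edges := by
  induction w with
  | nil =>
    rw [Walk.support_nil, List.mem_singleton] at hv
    exact absurd hv hvx
  | @cons x z _ h p ih =>
    have hw' := (Walk.cons_isPath_iff _ _).mp hw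
    have hv' : v ∈ p.support := by
      rw [Walk.support_cons, List.mem_cons] at hv
      exact hv.resolve_left hvx
    by_cases hvz : v = z
    · subst hvz
      cases p with
      | nil => exact absurd rfl hvy
      | @cons _ t _ h' q =>
        refine ⟨x, t, ?_, ?_, ?_⟩
        · intro hxt
          apply hw'.2
          rw [Walk.support_cons, List.mem_cons]
          exact Or.inr (hxt ▸ q.start_mem_support)
        · rw [Sym2.eq_swap, Walk.edges_cons]
          exact List.mem_cons_self
        · rw [Walk.edges_cons, Walk.edges_cons]
          exact List.mem_cons_of_mem _ List.mem_cons_self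
    · obtain ⟨a, b, hab, ha, hb⟩ := ih hw'.1 hv' hvz hvy
      exact ⟨a, b, hab, by simp [ha], by simp [hb]⟩

/-- The first edge of a nonnil walk. -/
lemma CK_first_edge_mem {x y : V} {q : G.Walk x y} (hq : ¬ q.Nil) :
    s(x, q.getVert 1) ∈ q.edges := by
  cases q with
  | nil => simp at hq
  | cons h p => simp [Walk.getVert_cons_succ]

/-- The start of a cycle has two distinct incident edges going to support vertices. -/
lemma CK_cycle_start {v : V} {c : G.Walk v v} (hc : c.IsCycle) :
    ∃ a b, a ≠ b ∧ s(v, a) ∈ c.edges ∧ s(v, b) ∈ c.edges ∧ a ∈ c.support ∧ b ∈ c.support := by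
  cases c with
  | nil => exact absurd hc (Walk.IsCycle.not_of_nil)
  | @cons _ z _ h p =>
    have hlen : 3 ≤ p.length + 1 := by simpa using hc.three_le_length
    have hpnil : ¬ p.reverse.Nil := by
      rw [Walk.nil_iff_length_eq, Walk.length_reverse]
      omega
    have hbe : s(v, p.reverse.getVert 1) ∈ p.edges := by
      have := CK_first_edge_mem hpnil
      rwa [Walk.edges_reverse, List.mem_reverse] at this
    have hnodup : (Walk.cons h p).edges.Nodup := hc.isTrail.edges_nodup
    rw [Walk.edges_cons, List.nodup_cons] at hnodup
    refine ⟨z, p.reverse.getVert 1, ?_, by simp, ?_, by simp, ?_⟩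
    · intro heq
      have h2 : s(v, z) = s(v, p.reverse.getVert 1) := congrArg (fun t => s(v, t)) heq
      exact hnodup.1 (by rw [h2]; exact hbe)
    · rw [Walk.edges_cons]
      exact List.mem_cons_of_mem _ hbe
    · have := p.snd_mem_support_of_mem_edges hbe
      rw [Walk.support_cons, List.mem_cons]
      exact Or.inr this

end SimpleGraph.Walk



namespace CK

variable {n : ℕ}

/-- basis vector -/
def bv (i : Fin n) : Fin n → ZMod 2 := fun j => if j = i then 1 else 0

def Vv (z i : Fin n) : Fin n → ZMod 2 := fun j => bv z j + bv i j

def Tv (z i l : Fin n) : Fin n → ZMod 2 := fun j => bv z j + bv i j + bv l j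

lemma bv_inj {i j : Fin n} (h : bv i = bv j) : i = j := by
  by_contra hne
  simpa [bv, hne] using congrFun h i

lemma zero_ne_bv (i : Fin n) : (0 : Fin n → ZMod 2) ≠ bv i := by
  intro h
  simpa [bv] using congrFun h i

lemma zero_ne_Vv {z i : Fin n} (hiz : i ≠ z) : (0 : Fin n → ZMod 2) ≠ Vv z i := by
  intro h
  simpa [Vv, bv, Ne.symm hiz] using congrFun h z

lemma zero_ne_Tv {z i l : Fin n} (hiz : i ≠ z) (hzl : z ≠ l) :
    (0 : Fin n → ZMod 2) ≠ Tv z i l := by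
  intro h
  simpa [Tv, bv, Ne.symm hiz, hzl] using congrFun h z

lemma bv_ne_Vv {z i : Fin n} (j : Fin n) (hiz : i ≠ z) : bv j ≠ Vv z i := by
  intro h
  by_cases hj : j = z
  · subst hj
    simpa [Vv, bv, hiz, Ne.symm hiz] using congrFun h i
  · simpa [Vv, bv, Ne.symm hiz, Ne.symm hj] using congrFun h z

lemma bv_ne_Tv {z i l : Fin n} (j : Fin n) (hiz : i ≠ z) (hil : i ≠ l) (hzl : z ≠ l) :
    bv j ≠ Tv z i l := by
  intro h
  by_cases hj : j = z
  · subst hj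
    simpa [Tv, bv, hiz, Ne.symm hiz, hil] using congrFun h i
  · simpa [Tv, bv, Ne.symm hiz, hzl, Ne.symm hj] using congrFun h z

lemma Vv_ne_Tv {z i l j : Fin n} (hjz : j ≠ z) (hjl : j ≠ l) (hzl : z ≠ l) (hil : i ≠ l) :
    Vv z j ≠ Tv z i l := by
  intro h
  simpa [Vv, Tv, bv, Ne.symm hzl, Ne.symm hjl, Ne.symm hil] using congrFun h l

lemma Vv_inj {z i j : Fin n} (hiz : i ≠ z) (h : Vv z i = Vv z j) : i = j := by
  by_contra hne
  simpa [Vv, bv, hiz, hne] using congrFun h i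

lemma Tv_inj {z i j l : Fin n} (hiz : i ≠ z) (hil : i ≠ l) (h : Tv z i l = Tv z j l) :
    i = j := by
  by_contra hne
  simpa [Tv, bv, hiz, hil, hne] using congrFun h i







lemma hd_one {a c : Fin n → ZMod 2} (k : Fin n) (h : ∀ j, c j = a j + bv k j) :
    hammingDist a c = 1 := by
  have hset : ({j | a j ≠ c j} : Finset (Fin n)) = {k} := by
    ext j
    simp only [Finset.mem_filter, Finset.mem_univ, true_and, Finset.mem_singleton,
      Set.mem_setOf_eq]
    constructor
    · intro hj
      by_contra hjk
      rw [h j, bv, if_neg hjk, add_zero] at hj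
      · exact hj rfl
    · intro hjk
      subst hjk
      rw [h j, bv, if_pos rfl]
      exact (by decide : ∀ p : ZMod 2, p ≠ p + 1) (a j)
  rw [hammingDist, hset, Finset.card_singleton]

lemma hd_one_inv {a c : Fin n → ZMod 2} (h : hammingDist a c = 1) :
    ∃ k, ∀ j, c j = a j + bv k j := by
  rw [hammingDist, Finset.card_eq_one] at h
  obtain ⟨k, hk⟩ := h
  refine ⟨k, fun j => ?_⟩
  by_cases hj : j = k
  · subst hj
    have : j ∈ ({i | a i ≠ c i} : Finset (Fin n)) := by rw [hk]; exact Finset.mem_singleton_self _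
    simp only [Finset.mem_filter] at this
    have hne : a j ≠ c j := by simpa using this
    rw [bv, if_pos rfl]
    revert hne
    exact fun hne => ((by decide : ∀ p q : ZMod 2, p ≠ q → q = p + 1) _ _ hne)
  · have : j ∉ ({i | a i ≠ c i} : Finset (Fin n)) := by
      rw [hk]; simpa using hj
    simp only [Finset.mem_filter] at this
    have heq : a j = c j := by
      by_contra hne
      exact this (by simpa using hne)
    rw [bv, if_neg hj, add_zero, heq]



lemma pigeon3 {α : Sort*} {a b c p q : α} (ha : a = p ∨ a = q) (hb : b = p ∨ b = q)
    (hc : c = p ∨ c = q) : a = b ∨ a = c ∨ b = c := by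
  rcases ha with rfl | rfl <;> rcases hb with rfl | rfl <;> rcases hc with rfl | rfl <;> tauto

end CK

open CK in
theorem stmt16 (n : ℕ) (hn : 3 ≤ n) :
    ∃ (x y : Fin n → ZMod 2) (P : Finset (Sym2 (Fin n → ZMod 2))),
      parity x ≠ parity y ∧
      ↑P ⊆ (cube n).edgeSet ∧
      P.card = 2 * n - 3 ∧
      (SimpleGraph.fromEdgeSet ((↑P : Set (Sym2 (Fin n → ZMod 2))))).IsAcyclic ∧
      (∀ v, ((SimpleGraph.fromEdgeSet (↑P : Set (Sym2 (Fin n → ZMod 2)))).neighborSet v).ncard ≤ 2) ∧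
      ((SimpleGraph.fromEdgeSet ((↑P : Set (Sym2 (Fin n → ZMod 2))))).neighborSet x).ncard ≤ 1 ∧
      ((SimpleGraph.fromEdgeSet ((↑P : Set (Sym2 (Fin n → ZMod 2))))).neighborSet y).ncard ≤ 1 ∧
      ¬ (SimpleGraph.fromEdgeSet (↑P : Set (Sym2 (Fin n → ZMod 2)))).Reachable x y ∧
      ¬ ∃ w : (cube n).Walk x y, w.IsHamiltonian ∧ ∀ e ∈ P, e ∈ w.edges := by
  -- indices
  set n0 : Fin n := ⟨0, by omega⟩ with hn0def
  set n1 : Fin n := ⟨1, by omega⟩ with hn1def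
  set L : Fin n := ⟨n - 1, by omega⟩ with hLdef
  have hn0n1 : n0 ≠ n1 := by simp [hn0def, hn1def, Fin.ext_iff]
  have hn0L : n0 ≠ L := by simp [hn0def, hLdef, Fin.ext_iff]; omega
  have hn1L : n1 ≠ L := by simp [hn1def, hLdef, Fin.ext_iff]; omega
  -- index set
  set S : Finset (Fin n) := (Finset.univ.erase n0).erase L with hSdef
  have hS : ∀ i, i ∈ S ↔ i ≠ L ∧ i ≠ n0 := by
    intro i; simp [hSdef, Finset.mem_erase]
  have hn1S : n1 ∈ S := (hS n1).mpr ⟨hn1L, Ne.symm hn0n1⟩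
  have hScard : S.card = n - 2 := by
    rw [hSdef, Finset.card_erase_of_mem, Finset.card_erase_of_mem (Finset.mem_univ _),
      Finset.card_univ, Fintype.card_fin]
    · omega
    · exact Finset.mem_erase.mpr ⟨Ne.symm hn0L, Finset.mem_univ _⟩
  -- the edge set
  set P : Finset (Sym2 (Fin n → ZMod 2)) :=
    insert s((0 : Fin n → ZMod 2), bv n1)
      ((S.image fun i => s(Vv n0 i, bv i)) ∪ (S.image fun i => s(Vv n0 i, Tv n0 i L)))
    with hPdef
  -- membership characterization
  have hmemP : ∀ v a : Fin n → ZMod 2, s(v, a) ∈ P →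
      (v = 0 ∧ a = bv n1) ∨ (v = bv n1 ∧ a = 0) ∨
      (∃ i ∈ S, v = Vv n0 i ∧ (a = bv i ∨ a = Tv n0 i L)) ∨
      (∃ i ∈ S, v = bv i ∧ a = Vv n0 i) ∨
      (∃ i ∈ S, v = Tv n0 i L ∧ a = Vv n0 i) := by
    intro v a h
    rw [hPdef, Finset.mem_insert, Finset.mem_union, Finset.mem_image, Finset.mem_image] at h
    rcases h with h | ⟨i, hi, heq⟩ | ⟨i, hi, heq⟩
    · rcases Sym2.eq_iff.mp h with ⟨rfl, rfl⟩ | ⟨rfl, rfl⟩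
      · exact Or.inl ⟨rfl, rfl⟩
      · exact Or.inr (Or.inl ⟨rfl, rfl⟩)
    · rcases Sym2.eq_iff.mp heq with ⟨rfl, rfl⟩ | ⟨rfl, rfl⟩
      · exact Or.inr (Or.inr (Or.inl ⟨i, hi, rfl, Or.inl rfl⟩))
      · exact Or.inr (Or.inr (Or.inr (Or.inl ⟨i, hi, rfl, rfl⟩)))
    · rcases Sym2.eq_iff.mp heq with ⟨rfl, rfl⟩ | ⟨rfl, rfl⟩
      · exact Or.inr (Or.inr (Or.inl ⟨i, hi, rfl, Or.inr rfl⟩))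
      · exact Or.inr (Or.inr (Or.inr (Or.inr ⟨i, hi, rfl, rfl⟩)))
  -- class lemmas
  have hA : ∀ a, s((0 : Fin n → ZMod 2), a) ∈ P → a = bv n1 := by
    intro a h
    rcases hmemP _ _ h with ⟨-, rfl⟩ | ⟨h0, -⟩ | ⟨i, hi, h0, -⟩ | ⟨i, hi, h0, -⟩ | ⟨i, hi, h0, -⟩
    · rfl
    · exact absurd h0 (zero_ne_bv n1)
    · exact absurd h0 (zero_ne_Vv (((hS i).mp hi).2))
    · exact absurd h0 (zero_ne_bv i)
    · exact absurd h0 (zero_ne_Tv (((hS i).mp hi).2) hn0L)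
  have hB : ∀ i, i ∈ S → ∀ a, s(bv i, a) ∈ P → a = Vv n0 i ∨ (i = n1 ∧ a = 0) := by
    intro i hi a h
    rcases hmemP _ _ h with ⟨h0, -⟩ | ⟨h0, rfl⟩ | ⟨j, hj, h0, -⟩ | ⟨j, hj, h0, rfl⟩ | ⟨j, hj, h0, -⟩
    · exact absurd h0.symm (zero_ne_bv i)
    · exact Or.inr ⟨bv_inj h0, rfl⟩
    · exact absurd h0 (bv_ne_Vv i ((hS j).mp hj).2)
    · exact Or.inl (congrArg (Vv n0) (bv_inj h0)).symm
    · exact absurd h0 (bv_ne_Tv i ((hS j).mp hj).2 ((hS j).mp hj).1 hn0L)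
  have hC : ∀ i, i ∈ S → ∀ a, s(Vv n0 i, a) ∈ P → a = bv i ∨ a = Tv n0 i L := by
    intro i hi a h
    obtain ⟨hiL, hi0⟩ := (hS i).mp hi
    rcases hmemP _ _ h with ⟨h0, -⟩ | ⟨h0, -⟩ | ⟨j, hj, h0, hcase⟩ | ⟨j, hj, h0, -⟩ | ⟨j, hj, h0, -⟩
    · exact absurd h0.symm (zero_ne_Vv hi0)
    · exact absurd h0.symm (bv_ne_Vv n1 hi0)
    · obtain rfl := Vv_inj hi0 h0
      exact hcase
    · exact absurd h0.symm (bv_ne_Vv j hi0)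
    · exact absurd h0 (Vv_ne_Tv hi0 hiL hn0L ((hS j).mp hj).1)
  have hE : ∀ i, i ∈ S → ∀ a, s(Tv n0 i L, a) ∈ P → a = Vv n0 i := by
    intro i hi a h
    obtain ⟨hiL, hi0⟩ := (hS i).mp hi
    rcases hmemP _ _ h with ⟨h0, -⟩ | ⟨h0, -⟩ | ⟨j, hj, h0, -⟩ | ⟨j, hj, h0, -⟩ | ⟨j, hj, h0, rfl⟩
    · exact absurd h0.symm (zero_ne_Tv hi0 hn0L)
    · exact absurd h0.symm (bv_ne_Tv n1 hi0 hiL hn0L)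
    · exact absurd h0.symm (Vv_ne_Tv ((hS j).mp hj).2 ((hS j).mp hj).1 hn0L hiL)
    · exact absurd h0.symm (bv_ne_Tv j hi0 hiL hn0L)
    · obtain rfl := Tv_inj hi0 hiL h0
      rfl
  have hYnone : ∀ a, s(bv L, a) ∈ P → False := by
    intro a h
    rcases hmemP _ _ h with ⟨h0, -⟩ | ⟨h0, -⟩ | ⟨j, hj, h0, -⟩ | ⟨j, hj, h0, -⟩ | ⟨j, hj, h0, -⟩
    · exact zero_ne_bv L h0.symm
    · exact hn1L (bv_inj h0).symm
    · exact bv_ne_Vv L ((hS j).mp hj).2 h0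
    · exact ((hS j).mp hj).1 (bv_inj h0).symm
    · exact bv_ne_Tv L ((hS j).mp hj).2 ((hS j).mp hj).1 hn0L h0
  -- membership producers
  have hP1 : s((0 : Fin n → ZMod 2), bv n1) ∈ P := by
    rw [hPdef]; exact Finset.mem_insert_self _ _
  have hPA : ∀ i ∈ S, s(Vv n0 i, bv i) ∈ P := by
    intro i hi
    rw [hPdef]
    exact Finset.mem_insert_of_mem (Finset.mem_union_left _ (Finset.mem_image_of_mem _ hi))
  have hPB : ∀ i ∈ S, s(Vv n0 i, Tv n0 i L) ∈ P := by
    intro i hi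
    rw [hPdef]
    exact Finset.mem_insert_of_mem (Finset.mem_union_right _ (Finset.mem_image_of_mem _ hi))
  have adjP : ∀ v a : Fin n → ZMod 2,
      (SimpleGraph.fromEdgeSet (↑P : Set (Sym2 (Fin n → ZMod 2)))).Adj v a → s(v, a) ∈ P :=
    fun v a h => Finset.mem_coe.mp ((SimpleGraph.fromEdgeSet_adj _).mp h).1
  refine ⟨0, bv L, P, ?_, ?_, ?_, ?_, ?_, ?_, ?_, ?_, ?_⟩
  · -- parity
    have h0 : parity (0 : Fin n → ZMod 2) = 0 := by simp [parity]
    have h1 : parity (bv L) = 1 := by simp [parity, bv]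
    rw [h0, h1]
    exact zero_ne_one
  · -- edge subset
    intro e he
    rw [Finset.mem_coe, hPdef, Finset.mem_insert, Finset.mem_union,
      Finset.mem_image, Finset.mem_image] at he
    rcases he with rfl | ⟨i, hi, rfl⟩ | ⟨i, hi, rfl⟩
    · rw [SimpleGraph.mem_edgeSet]
      show hammingDist _ _ = 1
      exact hd_one n1 (fun j => by rw [Pi.zero_apply, zero_add])
    · rw [SimpleGraph.mem_edgeSet]
      show hammingDist _ _ = 1
      exact hd_one n0 (fun j => (by decide : ∀ p q : ZMod 2, q = p + q + p) (bv n0 j) (bv i j))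
    · rw [SimpleGraph.mem_edgeSet]
      show hammingDist _ _ = 1
      exact hd_one L (fun j => rfl)
  · -- cardinality
    have hcA : (S.image fun i => s(Vv n0 i, bv i)).card = n - 2 := by
      rw [Finset.card_image_of_injOn, hScard]
      intro i hi j hj heq
      rcases Sym2.eq_iff.mp heq with ⟨-, h2⟩ | ⟨-, h2⟩
      · exact bv_inj h2
      · exact absurd h2 (bv_ne_Vv i ((hS j).mp hj).2)
    have hcB : (S.image fun i => s(Vv n0 i, Tv n0 i L)).card = n - 2 := by
      rw [Finset.card_image_of_injOn, hScard]
      intro i hi j hj heq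
      rcases Sym2.eq_iff.mp heq with ⟨h1, h2⟩ | ⟨h1, h2⟩
      · exact Vv_inj ((hS i).mp hi).2 h1
      · exact absurd h1 (Vv_ne_Tv ((hS i).mp hi).2 ((hS i).mp hi).1 hn0L ((hS j).mp hj).1)
    have hdisj : Disjoint (S.image fun i => s(Vv n0 i, bv i))
        (S.image fun i => s(Vv n0 i, Tv n0 i L)) := by
      rw [Finset.disjoint_left]
      intro e heA heB
      rw [Finset.mem_image] at heA heB
      obtain ⟨i, hi, rfl⟩ := heA
      obtain ⟨j, hj, heq⟩ := heB
      rcases Sym2.eq_iff.mp heq with ⟨h1, h2⟩ | ⟨h1, h2⟩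
      · exact bv_ne_Tv i ((hS j).mp hj).2 ((hS j).mp hj).1 hn0L h2.symm
      · exact bv_ne_Vv i ((hS j).mp hj).2 h1.symm
    have hnotmem : s((0 : Fin n → ZMod 2), bv n1) ∉
        (S.image fun i => s(Vv n0 i, bv i)) ∪ (S.image fun i => s(Vv n0 i, Tv n0 i L)) := by
      rw [Finset.mem_union, Finset.mem_image, Finset.mem_image]
      rintro (⟨i, hi, heq⟩ | ⟨i, hi, heq⟩) <;>
        rcases Sym2.eq_iff.mp heq with ⟨h1, -⟩ | ⟨-, h2⟩
      · exact zero_ne_Vv ((hS i).mp hi).2 h1.symm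
      · exact zero_ne_bv i h2.symm
      · exact zero_ne_Vv ((hS i).mp hi).2 h1.symm
      · exact zero_ne_Tv ((hS i).mp hi).2 hn0L h2.symm
    rw [hPdef, Finset.card_insert_of_notMem hnotmem, Finset.card_union_of_disjoint hdisj,
      hcA, hcB]
    omega
  · -- acyclic
    intro v c hc
    have cyc2 : ∀ (t : Fin n → ZMod 2)
        (c' : (SimpleGraph.fromEdgeSet (↑P : Set (Sym2 (Fin n → ZMod 2)))).Walk t t),
        c'.IsCycle → ∃ a b, a ≠ b ∧ s(t, a) ∈ P ∧ s(t, b) ∈ P ∧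
          a ∈ c'.support ∧ b ∈ c'.support := by
      intro t c' hc'
      obtain ⟨a, b, hab, ha, hb, haS, hbS⟩ := SimpleGraph.Walk.CK_cycle_start hc'
      exact ⟨a, b, hab, adjP _ _ (c'.adj_of_mem_edges ha), adjP _ _ (c'.adj_of_mem_edges hb),
        haS, hbS⟩
    have no0 : ∀ (c' : (SimpleGraph.fromEdgeSet (↑P : Set (Sym2 (Fin n → ZMod 2)))).Walk
        (0 : Fin n → ZMod 2) 0), ¬ c'.IsCycle := by
      intro c' hc'
      obtain ⟨a, b, hab, ha, hb, -, -⟩ := cyc2 0 c' hc'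
      exact hab ((hA a ha).trans (hA b hb).symm)
    have noT : ∀ i, i ∈ S → ∀ (c' : (SimpleGraph.fromEdgeSet
        (↑P : Set (Sym2 (Fin n → ZMod 2)))).Walk (Tv n0 i L) (Tv n0 i L)), ¬ c'.IsCycle := by
      intro i hi c' hc'
      obtain ⟨a, b, hab, ha, hb, -, -⟩ := cyc2 _ c' hc'
      exact hab ((hE i hi a ha).trans (hE i hi b hb).symm)
    obtain ⟨a, b, hab, ha, hb, haS, hbS⟩ := cyc2 v c hc
    have hbvcase : ∀ i, i ∈ S → v = bv i → False := by
      intro i hi hv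
      subst hv
      rcases hB i hi a ha with rfl | ⟨-, rfl⟩
      · rcases hB i hi b hb with rfl | ⟨-, rfl⟩
        · exact hab rfl
        · exact no0 (c.rotate _ hbS) (hc.rotate hbS)
      · exact no0 (c.rotate _ haS) (hc.rotate haS)
    rcases hmemP v a ha with ⟨rfl, -⟩ | ⟨rfl, -⟩ | ⟨i, hi, rfl, -⟩ | ⟨i, hi, hv, -⟩ | ⟨i, hi, rfl, -⟩
    · exact no0 c hc
    · exact hbvcase n1 hn1S rfl
    · rcases hC i hi a ha with rfl | rfl
      · rcases hC i hi b hb with rfl | rfl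
        · exact hab rfl
        · exact noT i hi (c.rotate _ hbS) (hc.rotate hbS)
      · exact noT i hi (c.rotate _ haS) (hc.rotate haS)
    · exact hbvcase i hi hv
    · exact hab ((hE i hi a ha).trans (hE i hi b hb).symm)
  · -- max degree 2
    intro v
    by_contra hcon
    push_neg at hcon
    rw [Set.two_lt_ncard_iff] at hcon
    obtain ⟨a, b, c, ha, hb, hc, hab, hac, hbc⟩ := hcon
    have haP := adjP _ _ (SimpleGraph.mem_neighborSet _ _ _ |>.mp ha)
    have hbP := adjP _ _ (SimpleGraph.mem_neighborSet _ _ _ |>.mp hb)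
    have hcP := adjP _ _ (SimpleGraph.mem_neighborSet _ _ _ |>.mp hc)
    rcases hmemP v a haP with ⟨rfl, -⟩ | ⟨rfl, -⟩ | ⟨i, hi, rfl, -⟩ | ⟨i, hi, rfl, -⟩ | ⟨i, hi, rfl, -⟩
    · exact hab ((hA a haP).trans (hA b hbP).symm)
    · have f : ∀ d, s(bv n1, d) ∈ P → d = Vv n0 n1 ∨ d = 0 :=
        fun d hd => (hB n1 hn1S d hd).imp id And.right
      rcases pigeon3 (f a haP) (f b hbP) (f c hcP) with h | h | h
      · exact hab h
      · exact hac h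
      · exact hbc h
    · rcases pigeon3 (hC i hi a haP) (hC i hi b hbP) (hC i hi c hcP) with h | h | h
      · exact hab h
      · exact hac h
      · exact hbc h
    · have f : ∀ d, s(bv i, d) ∈ P → d = Vv n0 i ∨ d = 0 :=
        fun d hd => (hB i hi d hd).imp id And.right
      rcases pigeon3 (f a haP) (f b hbP) (f c hcP) with h | h | h
      · exact hab h
      · exact hac h
      · exact hbc h
    · exact hab ((hE i hi a haP).trans (hE i hi b hbP).symm)
  · -- degree of x
    have hsub : (SimpleGraph.fromEdgeSet (↑P : Set (Sym2 (Fin n → ZMod 2)))).neighborSet 0 ⊆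
        {bv n1} := fun a ha => hA a (adjP _ _ ha)
    calc _ ≤ ({bv n1} : Set (Fin n → ZMod 2)).ncard :=
          Set.ncard_le_ncard hsub (Set.finite_singleton _)
      _ = 1 := Set.ncard_singleton _
  · -- degree of y
    have hsub : (SimpleGraph.fromEdgeSet (↑P : Set (Sym2 (Fin n → ZMod 2)))).neighborSet
        (bv L) ⊆ {0} := fun a ha => absurd (adjP _ _ ha) (fun h => hYnone a h)
    calc _ ≤ ({0} : Set (Fin n → ZMod 2)).ncard :=
          Set.ncard_le_ncard hsub (Set.finite_singleton _)
      _ = 1 := Set.ncard_singleton _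
  · -- not reachable
    rintro ⟨w⟩
    have hxy : (0 : Fin n → ZMod 2) ≠ bv L := zero_ne_bv L
    have hnil : ¬ w.reverse.Nil := SimpleGraph.Walk.not_nil_of_ne (Ne.symm hxy)
    exact hYnone _ (adjP _ _ (w.reverse.adj_snd hnil))
  · -- no hamiltonian path through P
    rintro ⟨w, hH, hPw⟩
    have hpath := hH.isPath
    have hu : bv n0 ∈ w.support := hH.mem_support (bv n0)
    have hux : bv n0 ≠ (0 : Fin n → ZMod 2) := Ne.symm (zero_ne_bv n0)
    have huy : bv n0 ≠ bv L := fun h => hn0L (bv_inj h)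
    obtain ⟨a, b, hab, ha, hb⟩ := SimpleGraph.Walk.CK_two_edges hpath hu hux huy
    have key : ∀ d, s(bv n0, d) ∈ w.edges → d = Vv n0 L := by
      intro d hd
      have hadj : (cube n).Adj (bv n0) d := w.adj_of_mem_edges hd
      have h1 : hammingDist (bv n0) d = 1 := hadj
      obtain ⟨k, hk⟩ := hd_one_inv h1
      by_cases hk0 : k = n0
      · subst hk0
        have hd0 : d = 0 := funext fun j => by
          rw [hk j]
          exact (by decide : ∀ p : ZMod 2, p + p = 0) _
        rw [hd0, Sym2.eq_swap] at hd
        have e1 := SimpleGraph.Walk.CK_start_edge hpath hd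
        have e2 := SimpleGraph.Walk.CK_start_edge hpath (hPw _ hP1)
        exact absurd (bv_inj (e1.trans e2.symm) : n0 = n1) hn0n1
      · have hdV : d = Vv n0 k := funext fun j => hk j
        by_cases hkL : k = L
        · subst hkL; exact hdV
        · have hkS : k ∈ S := (hS k).mpr ⟨hkL, hk0⟩
          have ea : s(Vv n0 k, bv k) ∈ w.edges := hPw _ (hPA k hkS)
          have eb : s(Vv n0 k, Tv n0 k L) ∈ w.edges := hPw _ (hPB k hkS)
          have ec : s(Vv n0 k, bv n0) ∈ w.edges := by
            rw [hdV, Sym2.eq_swap] at hd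
            exact hd
          have d1 : bv k ≠ Tv n0 k L := bv_ne_Tv k hk0 hkL hn0L
          have d2 : bv k ≠ bv n0 := fun h => hk0 (bv_inj h)
          have d3 : Tv n0 k L ≠ bv n0 := Ne.symm (bv_ne_Tv n0 hk0 hkL hn0L)
          exact (SimpleGraph.Walk.CK_no_three_edges hpath d1 d2 d3 ea eb ec).elim
    exact hab ((key a ha).trans (key b hb).symm)
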